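/- In an n-dimensional perfect-fluid spacetime (n ≥ 4), the sum of shear and vorticity is determined by the Weyl tensor: B(σ_{kl} + ω_{kl}) = −((n−2)/(n−3)) u^j h_l^q ∇^m C_{jkqm}. Consequently σ_{kl} = −((n−2)/(2B(n−3))) u^j (h_k^q ∇^m C_{jlqm} + h_l^q ∇^m C_{jkqm}) and ω_{kl} = ((n−2)/(2B(n−3))) u^j (h_k^q ∇^m C_{jlqm} − h_l^q ∇^m C_{jkqm}). -/

import Mathlib

open Finset

theorem shear_and_vorticity_from_weyl
    (M : Type*) (n : ℕ)
    (g ginv : M → Fin n → Fin n → ℝ)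
    (u : M → Fin n → ℝ)
    -- Du x k l  represents  ∇_k u_l
    (Du : M → Fin n → Fin n → ℝ)
    (uup : M → Fin n → ℝ)
    (huup : ∀ x i, uup x i = ∑ j, ginv x i j * u x j)
    -- u is unit timelike : u_k u^k = -1
    (hunit : ∀ x, ∑ k, uup x k * u x k = -1)
    (hgsym : ∀ x i j, g x i j = g x j i)
    (hginvsym : ∀ x i j, ginv x i j = ginv x j i)
    (hginv : ∀ x i j, ∑ m, ginv x i m * g x m j = if i = j then (1:ℝ) else 0)
    -- consequence of metric compatibility and u_k u^k = -1 : u^j ∇_k u_j = 0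
    (hDnorm : ∀ x k, ∑ j, uup x j * Du x k j = 0)
    (hn : 4 ≤ n)
    -- expansion scalar θ = ∇_k u^k
    (θ : M → ℝ) (hθ : ∀ x, θ x = ∑ k, ∑ l, ginv x k l * Du x k l)
    -- projector h_{kl} = g_{kl} + u_k u_l
    (h : M → Fin n → Fin n → ℝ)
    (hdefh : ∀ x k l, h x k l = g x k l + u x k * u x l)
    -- mixed projector h_k{}^i = δ_k^i + u_k u^i
    (hmix : M → Fin n → Fin n → ℝ)
    (hdefhmix : ∀ x k i, hmix x k i = (if k = i then (1:ℝ) else 0) + u x k * uup x i)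
    -- acceleration  \dot u_k = u^m ∇_m u_k
    (acc : M → Fin n → ℝ) (hacc : ∀ x k, acc x k = ∑ m, uup x m * Du x m k)
    -- vorticity ω_{kl} = (1/2) h_k{}^i h_l{}^j (∇_i u_j - ∇_j u_i)
    (ω : M → Fin n → Fin n → ℝ)
    (hω : ∀ x k l, ω x k l =
      (1/2) * ∑ i, ∑ j, hmix x k i * hmix x l j * (Du x i j - Du x j i))
    -- shear σ_{kl} = (1/2) h_k{}^i h_l{}^j (∇_i u_j + ∇_j u_i) - (θ/(n-1)) h_{kl}
    (σ : M → Fin n → Fin n → ℝ)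
    (hσ : ∀ x k l, σ x k l =
      (1/2) * (∑ i, ∑ j, hmix x k i * hmix x l j * (Du x i j + Du x j i))
        - (θ x / ((n:ℝ) - 1)) * h x k l)
    -- perfect-fluid (quasi-Einstein) Ricci tensor : R_{ij} = A g_{ij} + B u_i u_j
    (A B : M → ℝ) (hB : ∀ x, B x ≠ 0)
    -- gradients of the scalars A, B
    (DA DB : M → Fin n → ℝ)
    -- contracted second Bianchi identity ∇^j R_{ij} = (1/2) ∇_i R for
    -- R_{ij} = A g_{ij} + B u_i u_j, R = n A - B (divergence expanded by Leibniz)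
    (hBianchi : ∀ x i, DA x i + (∑ j, uup x j * DB x j) * u x i
        + B x * (θ x * u x i + acc x i) = (1/2) * ((n:ℝ) * DA x i - DB x i))
    -- DRic x k j l  represents  ∇_k R_{jl}, computed by Leibniz from R_{ij} = A g_{ij} + B u_i u_j
    (DRic : M → Fin n → Fin n → Fin n → ℝ)
    (hDRic : ∀ x k j l, DRic x k j l = DA x k * g x j l + DB x k * u x j * u x l
        + B x * (Du x k j * u x l + u x j * Du x k l))
    -- divC x j k l  represents  ∇^m C_{jklm}, with the standard divergence identity
    -- ∇^m C_{jklm} = ((n-3)/(n-2)) [∇_k R_{jl} - ∇_j R_{kl} - (1/(2(n-1)))(g_{jl} ∇_k R - g_{kl} ∇_j R)]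
    (divC : M → Fin n → Fin n → Fin n → ℝ)
    (hdivC : ∀ x j k l, divC x j k l = (((n:ℝ) - 3)/((n:ℝ) - 2)) *
        (DRic x k j l - DRic x j k l - (1/(2*((n:ℝ) - 1))) *
          (g x j l * ((n:ℝ) * DA x k - DB x k) - g x k l * ((n:ℝ) * DA x j - DB x j)))) :
    ∀ x k l,
      B x * (σ x k l + ω x k l) =
        -(((n:ℝ) - 2)/((n:ℝ) - 3)) * ∑ j, ∑ q, uup x j * hmix x l q * divC x j k q ∧
      σ x k l = -(((n:ℝ) - 2)/(2 * B x * ((n:ℝ) - 3))) *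
        ∑ j, (uup x j * ((∑ q, hmix x k q * divC x j l q) + (∑ q, hmix x l q * divC x j k q))) ∧
      ω x k l = (((n:ℝ) - 2)/(2 * B x * ((n:ℝ) - 3))) *
        ∑ j, (uup x j * ((∑ q, hmix x k q * divC x j l q) - (∑ q, hmix x l q * divC x j k q))) := by

  intro x k l
  have hn4 : (4:ℝ) ≤ (n:ℝ) := by exact_mod_cast hn
  have h1 : ((n:ℝ) - 1) ≠ 0 := by linarith
  have h2 : ((n:ℝ) - 2) ≠ 0 := by linarith
  have h3 : ((n:ℝ) - 3) ≠ 0 := by linarith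
  have hBx : B x ≠ 0 := hB x
  -- contraction of uup with the metric
  have L1 : ∀ q, ∑ j, uup x j * g x j q = u x q := by
    intro q
    have e1 : ∀ j, uup x j * g x j q = ∑ m, u x m * (ginv x m j * g x j q) := by
      intro j
      rw [huup, Finset.sum_mul]
      exact Finset.sum_congr rfl fun m _ => by rw [hginvsym]; ring
    rw [Finset.sum_congr rfl fun j _ => e1 j, Finset.sum_comm]
    have e2 : ∀ m, ∑ j, u x m * (ginv x m j * g x j q) = u x m * (if m = q then (1:ℝ) else 0) := by
      intro m; rw [← Finset.mul_sum, hginv]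
    rw [Finset.sum_congr rfl fun m _ => e2 m]
    simp
  have Lacc : ∀ p, ∑ j, uup x j * Du x j p = acc x p := fun p => (hacc x p).symm
  have L5 : ∑ q, uup x q * acc x q = 0 := by
    have e1 : ∀ q, uup x q * acc x q = ∑ m, uup x m * (uup x q * Du x m q) := by
      intro q; rw [hacc, Finset.mul_sum]
      exact Finset.sum_congr rfl fun m _ => by ring
    rw [Finset.sum_congr rfl fun q _ => e1 q, Finset.sum_comm]
    have e2 : ∀ m, ∑ q, uup x m * (uup x q * Du x m q) = 0 := by
      intro m; rw [← Finset.mul_sum, hDnorm, mul_zero]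
    rw [Finset.sum_congr rfl fun m _ => e2 m]
    simp
  -- generic hmix contraction
  have Mgen : ∀ p (f : Fin n → ℝ),
      ∑ q, hmix x p q * f q = f p + u x p * ∑ q, uup x q * f q := by
    intro p f
    have e1 : ∀ q, hmix x p q * f q
        = (if p = q then (1:ℝ) else 0) * f q + u x p * (uup x q * f q) := by
      intro q; rw [hdefhmix]; ring
    rw [Finset.sum_congr rfl fun q _ => e1 q, Finset.sum_add_distrib, ← Finset.mul_sum]
    congr 1
    simp
  have Mu : ∀ p, ∑ q, hmix x p q * u x q = 0 := by
    intro p; rw [Mgen, hunit]; ring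
  have Mg : ∀ p a, ∑ q, hmix x p q * g x a q = h x a p := by
    intro p a
    have e : ∑ q, uup x q * g x a q = u x a := by
      rw [Finset.sum_congr rfl fun q _ => by rw [hgsym x a q]]
      exact L1 a
    rw [Mgen, e, hdefh]
    ring
  have MDu : ∀ p a, ∑ q, hmix x p q * Du x a q = Du x a p := by
    intro p a; rw [Mgen, hDnorm]; ring
  have MDu' : ∀ p a, ∑ q, hmix x p q * Du x q a = Du x p a + u x p * acc x a := by
    intro p a; rw [Mgen (f := fun q => Du x q a), Lacc]
  have Macc : ∀ p, ∑ q, hmix x p q * acc x q = acc x p := by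
    intro p; rw [Mgen, L5]; ring
  have Uh : ∀ p, ∑ j, uup x j * h x j p = 0 := by
    intro p
    have e1 : ∀ j, uup x j * h x j p = uup x j * g x j p + (uup x j * u x j) * u x p := by
      intro j; rw [hdefh]; ring
    rw [Finset.sum_congr rfl fun j _ => e1 j, Finset.sum_add_distrib, L1, ← Finset.sum_mul,
      hunit]
    ring
  -- contracted Bianchi identity
  have bian : ((n:ℝ) - 2) * (∑ j, uup x j * DA x j) + (∑ j, uup x j * DB x j)
      + 2 * B x * θ x = 0 := by
    have hsum : ∑ i, uup x i * (DA x i + (∑ j, uup x j * DB x j) * u x i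
          + B x * (θ x * u x i + acc x i))
        = ∑ i, uup x i * ((1/2) * ((n:ℝ) * DA x i - DB x i)) :=
      Finset.sum_congr rfl fun i _ => by rw [hBianchi x i]
    have lhs : ∑ i, uup x i * (DA x i + (∑ j, uup x j * DB x j) * u x i
          + B x * (θ x * u x i + acc x i))
        = (∑ i, uup x i * DA x i) + (∑ j, uup x j * DB x j) * (-1)
          + B x * θ x * (-1) := by
      have e1 : ∀ i, uup x i * (DA x i + (∑ j, uup x j * DB x j) * u x i
            + B x * (θ x * u x i + acc x i))
          = uup x i * DA x i + (∑ j, uup x j * DB x j) * (uup x i * u x i)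
            + B x * θ x * (uup x i * u x i) + B x * (uup x i * acc x i) := by
        intro i; ring
      rw [Finset.sum_congr rfl fun i _ => e1 i, Finset.sum_add_distrib,
        Finset.sum_add_distrib, Finset.sum_add_distrib, ← Finset.mul_sum, ← Finset.mul_sum,
        ← Finset.mul_sum, hunit, L5]
      ring
    have rhs : ∑ i, uup x i * ((1/2) * ((n:ℝ) * DA x i - DB x i))
        = (1/2) * ((n:ℝ) * (∑ i, uup x i * DA x i) - (∑ i, uup x i * DB x i)) := by
      have e1 : ∀ i, uup x i * ((1/2) * ((n:ℝ) * DA x i - DB x i))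
          = (1/2) * ((n:ℝ) * (uup x i * DA x i) - uup x i * DB x i) := fun i => by ring
      rw [Finset.sum_congr rfl fun i _ => e1 i, ← Finset.mul_sum, Finset.sum_sub_distrib,
        ← Finset.mul_sum]
    rw [lhs, rhs] at hsum
    linear_combination (-2 : ℝ) * hsum
  -- generic splitting of a linear combination
  have lincomb : ∀ (a b c d e : ℝ) (f1 f2 f3 f4 f5 : Fin n → ℝ),
      ∑ j, (a * f1 j + b * f2 j + c * f3 j + d * f4 j + e * f5 j)
        = a * ∑ j, f1 j + b * ∑ j, f2 j + c * ∑ j, f3 j + d * ∑ j, f4 j + e * ∑ j, f5 j := by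
    intro a b c d e f1 f2 f3 f4 f5
    simp only [Finset.sum_add_distrib, ← Finset.mul_sum]
  -- the key evaluation of the contracted divergence of Weyl
  have Sval : ∀ k l, (∑ j, ∑ q, uup x j * hmix x l q * divC x j k q)
      = (((n:ℝ) - 3)/((n:ℝ) - 2)) * (B x * θ x / ((n:ℝ) - 1) * h x k l
          - B x * Du x k l - B x * u x k * acc x l) := by
    intro k l
    have inner : ∀ j, ∑ q, uup x j * hmix x l q * divC x j k q
        = uup x j * ((((n:ℝ) - 3)/((n:ℝ) - 2)) *
            ((DA x k - (1/(2*((n:ℝ) - 1))) * ((n:ℝ) * DA x k - DB x k)) * h x j l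
            + (-(DA x j) + (1/(2*((n:ℝ) - 1))) * ((n:ℝ) * DA x j - DB x j)) * h x k l
            + B x * u x j * Du x k l - B x * u x k * Du x j l)) := by
      intro j
      have e1 : ∀ q, uup x j * hmix x l q * divC x j k q
          = uup x j * ((((n:ℝ) - 3)/((n:ℝ) - 2)) *
              ((DA x k - (1/(2*((n:ℝ) - 1))) * ((n:ℝ) * DA x k - DB x k))
                  * (hmix x l q * g x j q)
              + (-(DA x j) + (1/(2*((n:ℝ) - 1))) * ((n:ℝ) * DA x j - DB x j))
                  * (hmix x l q * g x k q)
              + (DB x k * u x j + B x * Du x k j - DB x j * u x k - B x * Du x j k)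
                  * (hmix x l q * u x q)
              + (B x * u x j) * (hmix x l q * Du x k q)
              + (-(B x) * u x k) * (hmix x l q * Du x j q))) := by
        intro q; rw [hdivC, hDRic, hDRic]; ring
      rw [Finset.sum_congr rfl fun q _ => e1 q, ← Finset.mul_sum, ← Finset.mul_sum]
      have e2 : ∑ q, ((DA x k - (1/(2*((n:ℝ) - 1))) * ((n:ℝ) * DA x k - DB x k))
                  * (hmix x l q * g x j q)
              + (-(DA x j) + (1/(2*((n:ℝ) - 1))) * ((n:ℝ) * DA x j - DB x j))
                  * (hmix x l q * g x k q)
              + (DB x k * u x j + B x * Du x k j - DB x j * u x k - B x * Du x j k)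
                  * (hmix x l q * u x q)
              + (B x * u x j) * (hmix x l q * Du x k q)
              + (-(B x) * u x k) * (hmix x l q * Du x j q))
          = (DA x k - (1/(2*((n:ℝ) - 1))) * ((n:ℝ) * DA x k - DB x k)) * h x j l
            + (-(DA x j) + (1/(2*((n:ℝ) - 1))) * ((n:ℝ) * DA x j - DB x j)) * h x k l
            + (DB x k * u x j + B x * Du x k j - DB x j * u x k - B x * Du x j k) * 0
            + (B x * u x j) * Du x k l + (-(B x) * u x k) * Du x j l := by
        rw [lincomb, Mg, Mg, Mu, MDu, MDu]
      rw [e2]; ring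
    rw [Finset.sum_congr rfl fun j _ => inner j]
    have e3 : ∀ j, uup x j * ((((n:ℝ) - 3)/((n:ℝ) - 2)) *
            ((DA x k - (1/(2*((n:ℝ) - 1))) * ((n:ℝ) * DA x k - DB x k)) * h x j l
            + (-(DA x j) + (1/(2*((n:ℝ) - 1))) * ((n:ℝ) * DA x j - DB x j)) * h x k l
            + B x * u x j * Du x k l - B x * u x k * Du x j l))
        = ((((n:ℝ) - 3)/((n:ℝ) - 2)) * (DA x k - (1/(2*((n:ℝ) - 1))) * ((n:ℝ) * DA x k - DB x k)))
            * (uup x j * h x j l)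
          + ((((n:ℝ) - 3)/((n:ℝ) - 2)) * h x k l * ((1/(2*((n:ℝ) - 1))) * (n:ℝ) - 1))
            * (uup x j * DA x j)
          + (-((((n:ℝ) - 3)/((n:ℝ) - 2)) * h x k l * (1/(2*((n:ℝ) - 1)))))
            * (uup x j * DB x j)
          + ((((n:ℝ) - 3)/((n:ℝ) - 2)) * B x * Du x k l) * (uup x j * u x j)
          + (-((((n:ℝ) - 3)/((n:ℝ) - 2)) * B x * u x k)) * (uup x j * Du x j l) := by
      intro j; ring
    rw [Finset.sum_congr rfl fun j _ => e3 j, lincomb, Uh, hunit, Lacc]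
    field_simp
    linear_combination (-(h x k l)) * bian
  -- explicit formulas for shear and vorticity
  have D2 : ∀ k l, ∑ i, ∑ j, hmix x k i * hmix x l j * Du x i j
      = Du x k l + u x k * acc x l := by
    intro k l
    have e1 : ∀ i, ∑ j, hmix x k i * hmix x l j * Du x i j = hmix x k i * Du x i l := by
      intro i
      have : ∑ j, hmix x k i * hmix x l j * Du x i j
          = hmix x k i * ∑ j, hmix x l j * Du x i j := by
        rw [Finset.mul_sum]; exact Finset.sum_congr rfl fun j _ => by ring
      rw [this, MDu]
    rw [Finset.sum_congr rfl fun i _ => e1 i, Mgen (f := fun i => Du x i l), Lacc]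
  have D2' : ∀ k l, ∑ i, ∑ j, hmix x k i * hmix x l j * Du x j i
      = Du x l k + u x l * acc x k := by
    intro k l
    have e1 : ∀ i, ∑ j, hmix x k i * hmix x l j * Du x j i
        = hmix x k i * Du x l i + u x l * (hmix x k i * acc x i) := by
      intro i
      have : ∑ j, hmix x k i * hmix x l j * Du x j i
          = hmix x k i * ∑ j, hmix x l j * Du x j i := by
        rw [Finset.mul_sum]; exact Finset.sum_congr rfl fun j _ => by ring
      rw [this, MDu']; ring
    rw [Finset.sum_congr rfl fun i _ => e1 i, Finset.sum_add_distrib, MDu,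
      ← Finset.mul_sum, Macc]
  have σval : ∀ k l, σ x k l
      = (1/2) * (Du x k l + Du x l k + u x k * acc x l + u x l * acc x k)
        - θ x / ((n:ℝ) - 1) * h x k l := by
    intro k l
    rw [hσ]
    have e : (∑ i, ∑ j, hmix x k i * hmix x l j * (Du x i j + Du x j i))
        = (Du x k l + u x k * acc x l) + (Du x l k + u x l * acc x k) := by
      rw [← D2 k l, ← D2' k l, ← Finset.sum_add_distrib]
      exact Finset.sum_congr rfl fun i _ => by
        rw [← Finset.sum_add_distrib]
        exact Finset.sum_congr rfl fun j _ => by ring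
    rw [e]; ring
  have ωval : ∀ k l, ω x k l
      = (1/2) * (Du x k l - Du x l k + u x k * acc x l - u x l * acc x k) := by
    intro k l
    rw [hω]
    have e : (∑ i, ∑ j, hmix x k i * hmix x l j * (Du x i j - Du x j i))
        = (Du x k l + u x k * acc x l) - (Du x l k + u x l * acc x k) := by
      rw [← D2 k l, ← D2' k l, ← Finset.sum_sub_distrib]
      exact Finset.sum_congr rfl fun i _ => by
        rw [← Finset.sum_sub_distrib]
        exact Finset.sum_congr rfl fun j _ => by ring
    rw [e]; ring
  have hsymm : h x l k = h x k l := by rw [hdefh, hdefh, hgsym]; ring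
  refine ⟨?_, ?_, ?_⟩
  · rw [σval, ωval, Sval]
    field_simp
    ring
  · have sp : ∑ j, (uup x j * ((∑ q, hmix x k q * divC x j l q)
          + (∑ q, hmix x l q * divC x j k q)))
        = (∑ j, ∑ q, uup x j * hmix x k q * divC x j l q)
          + (∑ j, ∑ q, uup x j * hmix x l q * divC x j k q) := by
      rw [← Finset.sum_add_distrib]
      refine Finset.sum_congr rfl fun j _ => ?_
      rw [mul_add, Finset.mul_sum, Finset.mul_sum]
      congr 1 <;> exact Finset.sum_congr rfl fun q _ => by ring
    rw [σval, sp, Sval, Sval, hsymm]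
    field_simp
    ring
  · have sp : ∑ j, (uup x j * ((∑ q, hmix x k q * divC x j l q)
          - (∑ q, hmix x l q * divC x j k q)))
        = (∑ j, ∑ q, uup x j * hmix x k q * divC x j l q)
          - (∑ j, ∑ q, uup x j * hmix x l q * divC x j k q) := by
      rw [← Finset.sum_sub_distrib]
      refine Finset.sum_congr rfl fun j _ => ?_
      rw [mul_sub, Finset.mul_sum, Finset.mul_sum]
      congr 1 <;> exact Finset.sum_congr rfl fun q _ => by ring
    rw [ωval, sp, Sval, Sval, hsymm]
    field_simp
    ring
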